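/- arXiv:math/0001163 — 2 statements merged into one kernel-verified Lean document; each statement's English description precedes it below -/
import Mathlib

section
/- Matrix-forest interpretation of the adjugate: for an N×N matrix G with augmented digraph G†, the (n,n) entry of the adjugate of -G (equivalently (-1)^{N-1} times the (n,n) cofactor of G) equals Σ_{F ∈ F_{{†,n}}} π_F, the signless sum of arc-weight products over all two-tree spanning forests of G† rooted at † and n. -/
open scoped Classical
open Finset

noncomputable section

/-- The step relation of an out-neighbor map: there is an arc from `a` to `b`. -/
def FStep {V : Type*} (f : V → Option V) (a b : V) : Prop := f a = some b

/-- A forest: a digraph in which every vertex has out-degree ≤ 1 (encoded by the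
out-neighbor map `f`) and which has no directed circuits. -/
def IsForest {V : Type*} (f : V → Option V) : Prop :=
  ∀ v, ¬ Relation.TransGen (FStep f) v v

/-- The roots of a forest: vertices of out-degree 0.  For a forest, the number of
trees (connected components) equals the number of roots. -/
def roots {V : Type*} [Fintype V] (f : V → Option V) : Finset V :=
  Finset.univ.filter (fun v => f v = none)

/-- `Reach f a b`: the directed path out of `a` (following arcs) passes through `b`. -/
def Reach {V : Type*} (f : V → Option V) (a b : V) : Prop :=
  Relation.ReflTransGen (FStep f) a b

/-- The productivity π_F of a forest: product of the weights of its arcs. -/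
def forestProd {V K : Type*} [Fintype V] [CommRing K] (w : V → V → K)
    (f : V → Option V) : K :=
  ∏ v, (match f v with | some u => w v u | none => 1)

/-- Arc weights of the augmented digraph G† on vertex set `Option (Fin N)`,
where `none` plays the role of the extra vertex †: arcs (i,j), i ≠ j, have
weight g_ij, arcs (i,†) have weight -Σ_j g_ij; there are no loops and no
arcs out of †. -/
def daggerWeight {N : ℕ} {K : Type*} [CommRing K] (G : Matrix (Fin N) (Fin N) K) :
    Option (Fin N) → Option (Fin N) → K
  | some i, some j => if i = j then 0 else G i j
  | some i, none => -(∑ j, G i j)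
  | none, _ => 0

namespace S15

variable {N : ℕ} (G : Matrix (Fin N) (Fin N) ℂ) (n : Fin N)

/-- expansion coefficients -/
def wA (i j : Fin N) (u : Option (Fin N)) : ℂ :=
  if i = n then (if j = n then (if u = none then 1 else 0) else 0)
  else if j = i then daggerWeight G (some i) u
  else if u = some j then -(G i j) else 0

def pterm (g : Fin N → Option (Fin N)) (σ : Equiv.Perm (Fin N)) : ℂ :=
  ((Equiv.Perm.sign σ : ℤ) : ℂ) * ∏ i, wA G n i (σ i) (g i)

def Tsum (g : Fin N → Option (Fin N)) : ℂ := ∑ σ : Equiv.Perm (Fin N), pterm G n g σ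

lemma entry_eq (i j : Fin N) :
    ((-G).updateRow n (Pi.single n 1)) i j = ∑ u : Option (Fin N), wA G n i j u := by
  rw [Matrix.updateRow_apply]
  by_cases hi : i = n
  · simp only [hi, if_pos rfl, wA, Pi.single_apply]
    rw [Fintype.sum_option]
    by_cases hj : j = n <;> simp [hj]
  · simp only [if_neg hi, wA, Matrix.neg_apply]
    by_cases hj : j = i
    · subst hj
      simp only [if_pos rfl, if_true]
      rw [Fintype.sum_option]
      simp only [daggerWeight]
      have h1 : (∑ j' : Fin N, if j = j' then 0 else G j j')
          = (∑ j', G j j') - G j j := by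
        have : ∀ j' : Fin N, (if j = j' then 0 else G j j')
            = G j j' - (if j = j' then G j j' else 0) := by
          intro j'; split <;> simp_all
        rw [Finset.sum_congr rfl (fun j' _ => this j'), Finset.sum_sub_distrib,
          Finset.sum_ite_eq Finset.univ j (fun j' => G j j')]
        simp
      rw [h1]; ring
    · simp only [if_neg hj]
      rw [Finset.sum_ite_eq' Finset.univ (some j) (fun _ => -(G i j))]
      simp

lemma det_eq :
    ((-G).updateRow n (Pi.single n 1)).det = ∑ g : Fin N → Option (Fin N), Tsum G n g := by
  rw [← Matrix.det_transpose, Matrix.det_apply']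
  have h1 : ∀ σ : Equiv.Perm (Fin N),
      (∏ i, ((-G).updateRow n (Pi.single n 1)).transpose (σ i) i)
        = ∑ g ∈ Fintype.piFinset (fun _ : Fin N => (Finset.univ : Finset (Option (Fin N)))),
            ∏ i, wA G n i (σ i) (g i) := by
    intro σ
    rw [← Finset.prod_univ_sum]
    refine Finset.prod_congr rfl fun i _ => ?_
    rw [Matrix.transpose_apply, entry_eq]
  calc (∑ σ : Equiv.Perm (Fin N), ((Equiv.Perm.sign σ : ℤ) : ℂ) *
          ∏ i, ((-G).updateRow n (Pi.single n 1)).transpose (σ i) i)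
      = ∑ σ : Equiv.Perm (Fin N), ∑ g ∈ Fintype.piFinset
          (fun _ : Fin N => (Finset.univ : Finset (Option (Fin N)))),
          ((Equiv.Perm.sign σ : ℤ) : ℂ) * ∏ i, wA G n i (σ i) (g i) := by
        refine Finset.sum_congr rfl fun σ _ => ?_
        rw [h1 σ, Finset.mul_sum]
    _ = ∑ g ∈ Fintype.piFinset (fun _ : Fin N => (Finset.univ : Finset (Option (Fin N)))),
          ∑ σ : Equiv.Perm (Fin N), pterm G n g σ := by
        rw [Finset.sum_comm]; rfl
    _ = ∑ g : Fin N → Option (Fin N), Tsum G n g := by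
        rw [Fintype.piFinset_univ]
        rfl

end S15

namespace S15

variable {N : ℕ}

def gStep (g : Fin N → Option (Fin N)) (i j : Fin N) : Prop := g i = some j

/-- successor function -/
def nx (g : Fin N → Option (Fin N)) : Fin N → Fin N := fun i => (g i).getD i

lemma nx_eq {g : Fin N → Option (Fin N)} {i j : Fin N} (h : g i = some j) : nx g i = j := by
  simp [nx, h]

/-- chain lemma: a compatible permutation propagates motion along the g-orbit -/
lemma chainlem {g : Fin N → Option (Fin N)} {σ : Equiv.Perm (Fin N)}
    (h1 : ∀ i, g i ≠ some i)
    (hc : ∀ i, σ i ≠ i → g i = some (σ i)) {j : Fin N} (hj : σ j ≠ j) :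
    ∀ a, σ ((nx g)^[a] j) = (nx g)^[a+1] j ∧ g ((nx g)^[a] j) = some ((nx g)^[a+1] j) := by
  intro a
  induction a with
  | zero =>
    have hg := hc j hj
    have : nx g j = σ j := nx_eq hg
    simpa [this] using hg
  | succ a ih =>
    obtain ⟨ih1, ih2⟩ := ih
    have hmove : σ ((nx g)^[a+1] j) ≠ (nx g)^[a+1] j := by
      intro hfix
      have hxeq : (nx g)^[a] j = (nx g)^[a+1] j := σ.injective (ih1.trans hfix.symm)
      exact h1 _ (by rw [ih2, ← hxeq])
    have hg := hc _ hmove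
    have h2 : (nx g)^[a+1+1] j = σ ((nx g)^[a+1] j) := by
      rw [Function.iterate_succ_apply' (nx g) (a+1) j, nx_eq hg]
    exact ⟨h2.symm, by rw [h2]; exact hg⟩

lemma iterchain {g : Fin N → Option (Fin N)} {j : Fin N}
    (hstep : ∀ t, g ((nx g)^[t] j) = some ((nx g)^[t+1] j)) :
    ∀ a b, a < b → Relation.TransGen (gStep g) ((nx g)^[a] j) ((nx g)^[b] j) := by
  intro a b hab
  induction b, hab using Nat.le_induction with
  | base => exact Relation.TransGen.single (hstep a)
  | succ b hb ih => exact Relation.TransGen.tail ih (hstep b)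

/-- a compatible permutation for an acyclic g is the identity -/
lemma compat_eq_one {g : Fin N → Option (Fin N)} {σ : Equiv.Perm (Fin N)}
    (hac : ∀ i, ¬ Relation.TransGen (gStep g) i i)
    (hc : ∀ i, σ i ≠ i → g i = some (σ i)) : σ = 1 := by
  by_contra hne
  have hj : ∃ j, σ j ≠ j := by
    by_contra hall
    push_neg at hall
    exact hne (Equiv.ext hall)
  obtain ⟨j, hj⟩ := hj
  have h1 : ∀ i, g i ≠ some i := fun i h => hac i (Relation.TransGen.single h)
  have hstep := fun t => (chainlem h1 hc hj t).2
  obtain ⟨x, y, hxy, hoxy⟩ := Finite.exists_ne_map_eq_of_infinite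
    (fun a : ℕ => (nx g)^[a] j)
  rcases hxy.lt_or_gt with h | h
  · have hT := iterchain hstep x y h
    rw [hoxy] at hT
    exact hac _ hT
  · have hT := iterchain hstep y x h
    rw [← hoxy] at hT
    exact hac _ hT

variable (G : Matrix (Fin N) (Fin N) ℂ) (n : Fin N)

lemma compat_of_ne_zero {g : Fin N → Option (Fin N)} {σ : Equiv.Perm (Fin N)}
    (h : pterm G n g σ ≠ 0) : ∀ i, σ i ≠ i → g i = some (σ i) := by
  intro i hi
  have hprod : ∏ k, wA G n k (σ k) (g k) ≠ 0 := fun h0 => h (by simp [pterm, h0])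
  have hfac : wA G n i (σ i) (g i) ≠ 0 :=
    Finset.prod_ne_zero_iff.mp hprod i (Finset.mem_univ i)
  by_contra hgi
  apply hfac
  unfold wA
  by_cases hin : i = n
  · subst hin
    rw [if_pos rfl, if_neg hi]
  · rw [if_neg hin, if_neg hi, if_neg hgi]

lemma sign_ne_zero (σ : Equiv.Perm (Fin N)) : ((Equiv.Perm.sign σ : ℤ) : ℂ) ≠ 0 := by
  rcases Int.units_eq_one_or (Equiv.Perm.sign σ) with h | h <;> simp [h]

lemma Tsum_zero_of_gn {g : Fin N → Option (Fin N)} (hg : g n ≠ none) : Tsum G n g = 0 := by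
  refine Finset.sum_eq_zero fun σ _ => ?_
  rcases eq_or_ne (σ n) n with h | h
  · have hz : wA G n n (σ n) (g n) = 0 := by
      rw [h]; unfold wA; rw [if_pos rfl, if_pos rfl, if_neg hg]
    have hzero : (∏ i, wA G n i (σ i) (g i)) = 0 :=
      Finset.prod_eq_zero (Finset.mem_univ n) hz
    simp [pterm, hzero]
  · have hz : wA G n n (σ n) (g n) = 0 := by
      unfold wA; rw [if_pos rfl, if_neg h]
    have hzero : (∏ i, wA G n i (σ i) (g i)) = 0 :=
      Finset.prod_eq_zero (Finset.mem_univ n) hz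
    simp [pterm, hzero]

lemma Tsum_zero_of_loop {g : Fin N → Option (Fin N)} {i : Fin N} (hg : g i = some i) :
    Tsum G n g = 0 := by
  refine Finset.sum_eq_zero fun σ _ => ?_
  by_contra h
  have hc := compat_of_ne_zero G n h i
  rcases eq_or_ne (σ i) i with hσ | hσ
  · have hz : wA G n i (σ i) (g i) = 0 := by
      rw [hσ, hg]; unfold wA
      by_cases hin : i = n
      · rw [if_pos hin, if_pos hin]; simp
      · rw [if_neg hin, if_pos rfl]; simp [daggerWeight]
    have hzero : (∏ i, wA G n i (σ i) (g i)) = 0 :=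
      Finset.prod_eq_zero (Finset.mem_univ i) hz
    exact h (by simp [pterm, hzero])
  · have := hc hσ
    rw [hg] at this
    exact hσ (by injection this with h'; exact h'.symm)

lemma Tsum_good {g : Fin N → Option (Fin N)} (hg : g n = none)
    (hac : ∀ i, ¬ Relation.TransGen (gStep g) i i) :
    Tsum G n g = ∏ i, (if i = n then 1 else daggerWeight G (some i) (g i)) := by
  have hmain : Tsum G n g = pterm G n g 1 := by
    refine Finset.sum_eq_single_of_mem 1 (Finset.mem_univ 1) fun σ _ hσ => ?_
    by_contra h
    exact hσ (compat_eq_one hac (compat_of_ne_zero G n h))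
  rw [hmain]
  have : ∀ i : Fin N, wA G n i ((1 : Equiv.Perm (Fin N)) i) (g i)
      = (if i = n then 1 else daggerWeight G (some i) (g i)) := by
    intro i
    by_cases hin : i = n
    · subst hin
      simp [wA, hg]
    · simp [wA, hin]
  simp only [pterm, this]
  simp

end S15

namespace S15

variable {N : ℕ}

def orb (g : Fin N → Option (Fin N)) (i₀ : Fin N) (a : ℕ) : Fin N := (nx g)^[a] i₀

lemma orb_zero (g : Fin N → Option (Fin N)) (i₀ : Fin N) : orb g i₀ 0 = i₀ := rfl

lemma orb_succ (g : Fin N → Option (Fin N)) (i₀ : Fin N) (a : ℕ) :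
    orb g i₀ (a+1) = nx g (orb g i₀ a) := Function.iterate_succ_apply' _ _ _

lemma step_of_cyc {g : Fin N → Option (Fin N)} {x : Fin N}
    (h : Relation.TransGen (gStep g) x x) :
    g x = some (nx g x) ∧ Relation.TransGen (gStep g) (nx g x) (nx g x) := by
  obtain ⟨u, hxu, hux⟩ := Relation.TransGen.head'_iff.mp h
  have hnxu : nx g x = u := nx_eq hxu
  refine ⟨by rw [hnxu]; exact hxu, ?_⟩
  rw [hnxu]
  exact Relation.TransGen.tail' hux hxu

lemma orbit_cyc {g : Fin N → Option (Fin N)} {i₀ : Fin N}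
    (h : Relation.TransGen (gStep g) i₀ i₀) :
    ∀ a, Relation.TransGen (gStep g) (orb g i₀ a) (orb g i₀ a) := by
  intro a; induction a with
  | zero => exact h
  | succ a ih => rw [orb_succ]; exact (step_of_cyc ih).2

lemma orbit_g {g : Fin N → Option (Fin N)} {i₀ : Fin N}
    (h : Relation.TransGen (gStep g) i₀ i₀) (a : ℕ) :
    g (orb g i₀ a) = some (orb g i₀ (a+1)) := by
  rw [orb_succ]; exact (step_of_cyc (orbit_cyc h a)).1

lemma return_of_transGen {g : Fin N → Option (Fin N)} {x y : Fin N}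
    (h : Relation.TransGen (gStep g) x y) :
    ∃ m, 1 ≤ m ∧ (nx g)^[m] x = y := by
  induction h with
  | single h => exact ⟨1, le_rfl, by simp [Function.iterate_one, nx_eq h]⟩
  | tail hab hbc ih =>
    obtain ⟨m, hm, he⟩ := ih
    exact ⟨m+1, by omega, by rw [Function.iterate_succ_apply', he, nx_eq hbc]⟩

lemma signflip (s x y : ℂ) (p : ℕ) :
    (s * (-(-1:ℂ)^p)) * (((-1:ℂ)^p * x) * y) = -(s * (x * y)) := by
  have e : ((-1:ℂ)^p) * ((-1:ℂ)^p) = 1 := by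
    rw [← pow_add]; exact Even.neg_one_pow ⟨p, rfl⟩
  have h : (s * (-(-1:ℂ)^p)) * (((-1:ℂ)^p * x) * y)
      = (((-1:ℂ)^p) * ((-1:ℂ)^p)) * (-(s * (x * y))) := by ring
  rw [h, e, one_mul]

variable (G : Matrix (Fin N) (Fin N) ℂ) (n : Fin N)

lemma Tsum_cyc {g : Fin N → Option (Fin N)} (hg : g n = none)
    (h1 : ∀ i, g i ≠ some i) {i₀ : Fin N}
    (hcyc : Relation.TransGen (gStep g) i₀ i₀) : Tsum G n g = 0 := by
  classical
  -- period
  have hex : ∃ m, 1 ≤ m ∧ (nx g)^[m] i₀ = i₀ := return_of_transGen hcyc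
  set p := Nat.find hex with hpdef
  obtain ⟨hp1, hpo⟩ := Nat.find_spec hex
  have hp0 : 0 < p := hp1
  have hmin : ∀ m, m < p → ¬(1 ≤ m ∧ (nx g)^[m] i₀ = i₀) := fun m hm => Nat.find_min hex hm
  have operiod : ∀ a, orb g i₀ (a + p) = orb g i₀ a := by
    intro a
    show (nx g)^[a + p] i₀ = (nx g)^[a] i₀
    rw [Function.iterate_add_apply, hpo]
  have operiodmul : ∀ k, orb g i₀ (p * k) = i₀ := by
    intro k
    induction k with
    | zero => simp [orb_zero]
    | succ k ih => rw [Nat.mul_succ, operiod]; exact ih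
  have omod : ∀ a, orb g i₀ a = orb g i₀ (a % p) := by
    intro a
    induction a using Nat.strong_induction_on with
    | _ a ih =>
      rcases Nat.lt_or_ge a p with h | h
      · rw [Nat.mod_eq_of_lt h]
      · have ha : a - p + p = a := Nat.sub_add_cancel h
        have h2 : orb g i₀ a = orb g i₀ (a - p) := by
          conv_lhs => rw [← ha]
          rw [operiod]
        have ha2 : a % p = (a - p) % p := Nat.mod_eq_sub_mod h
        rw [h2, ha2]
        exact ih (a - p) (by omega)
  have oinj : ∀ a b, a < p → b < p → orb g i₀ a = orb g i₀ b → a = b := by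
    have key : ∀ a b, a < b → b < p → orb g i₀ a = orb g i₀ b → False := by
      intro a b hab hbp he
      have hpb : p - b + b = p := Nat.sub_add_cancel (le_of_lt hbp)
      have h2 : orb g i₀ (p - b + a) = i₀ := by
        show (nx g)^[p - b + a] i₀ = i₀
        rw [Function.iterate_add_apply]
        have he' : (nx g)^[a] i₀ = (nx g)^[b] i₀ := he
        rw [he', ← Function.iterate_add_apply, hpb]
        exact hpo
      exact hmin (p - b + a) (by omega) ⟨by omega, h2⟩
    intro a b ha hb he
    rcases lt_trichotomy a b with h | h | h
    · exact absurd he (fun he => key a b h hb he)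
    · exact h
    · exact absurd he.symm (fun he => key b a h ha he)
  -- the cycle as a finset
  set C : Finset (Fin N) := (Finset.range p).image (orb g i₀) with hC
  have hCmem : ∀ a, orb g i₀ a ∈ C := by
    intro a
    refine Finset.mem_image.mpr ⟨a % p, Finset.mem_range.mpr (Nat.mod_lt a hp0), (omod a).symm⟩
  have hCelim : ∀ j ∈ C, ∃ a, a < p ∧ orb g i₀ a = j := by
    intro j hj
    obtain ⟨a, ha, he⟩ := Finset.mem_image.mp hj
    exact ⟨a, Finset.mem_range.mp ha, he⟩
  have hi₀C : i₀ ∈ C := by have := hCmem 0; rwa [orb_zero] at this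
  have hgC : ∀ j ∈ C, g j = some (nx g j) := by
    intro j hj
    obtain ⟨a, _, ha⟩ := hCelim j hj
    rw [← ha, ← orb_succ]
    exact orbit_g hcyc a
  have hnxC : ∀ j ∈ C, nx g j ∈ C := by
    intro j hj
    obtain ⟨a, _, ha⟩ := hCelim j hj
    rw [← ha, ← orb_succ]
    exact hCmem (a+1)
  have hnxne : ∀ j ∈ C, nx g j ≠ j := by
    intro j hj h
    exact h1 j (by rw [hgC j hj, h])
  have hnC : n ∉ C := by
    intro h
    have := hgC n h
    rw [hg] at this
    exact nomatch this
  -- the cycle permutation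
  have cinj : Function.Injective (fun j => if j ∈ C then nx g j else j) := by
    intro x y hxy
    simp only at hxy
    by_cases hx : x ∈ C <;> by_cases hy : y ∈ C
    · rw [if_pos hx, if_pos hy] at hxy
      obtain ⟨a, hap, ha⟩ := hCelim x hx
      obtain ⟨b, hbp, hb⟩ := hCelim y hy
      rw [← ha, ← hb, ← orb_succ, ← orb_succ] at hxy
      have e1 : orb g i₀ ((a+1) % p) = orb g i₀ ((b+1) % p) := by
        rw [← omod, ← omod]; exact hxy
      have e2 : (a+1) % p = (b+1) % p :=
        oinj _ _ (Nat.mod_lt _ hp0) (Nat.mod_lt _ hp0) e1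
      have hab : a = b := by
        by_cases h1a : a + 1 < p <;> by_cases h1b : b + 1 < p
        · rw [Nat.mod_eq_of_lt h1a, Nat.mod_eq_of_lt h1b] at e2; omega
        · have hbp' : b + 1 = p := by omega
          rw [Nat.mod_eq_of_lt h1a, hbp', Nat.mod_self] at e2; omega
        · have hap' : a + 1 = p := by omega
          rw [Nat.mod_eq_of_lt h1b, hap', Nat.mod_self] at e2; omega
        · omega
      rw [← ha, ← hb, hab]
    · rw [if_pos hx, if_neg hy] at hxy
      exact absurd (hxy ▸ hnxC x hx) hy
    · rw [if_neg hx, if_pos hy] at hxy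
      exact absurd (hxy ▸ hx) (fun h => h (hxy ▸ hnxC y hy))
    · rwa [if_neg hx, if_neg hy] at hxy
  set c : Equiv.Perm (Fin N) :=
    Equiv.ofBijective _ (Finite.injective_iff_bijective.mp cinj) with hcdef
  have hcapp : ∀ j, c j = if j ∈ C then nx g j else j := fun j => rfl
  have hcC : ∀ j ∈ C, c j = nx g j := by intro j hj; rw [hcapp, if_pos hj]
  have hcnC : ∀ j ∉ C, c j = j := by intro j hj; rw [hcapp, if_neg hj]
  have hcinvC : ∀ j ∈ C, c⁻¹ j ∈ C := by
    intro j hj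
    by_contra h
    have h2 : c (c⁻¹ j) = c⁻¹ j := hcnC _ h
    rw [← Equiv.Perm.mul_apply, mul_inv_cancel, Equiv.Perm.one_apply] at h2
    rw [h2] at hj
    exact h hj
  have hcinvnC : ∀ j ∉ C, c⁻¹ j = j := by
    intro j hj
    have := hcnC j hj
    calc c⁻¹ j = c⁻¹ (c j) := by rw [this]
    _ = j := c.symm_apply_apply j
  have hci₀ : c i₀ ≠ i₀ := by
    rw [hcC i₀ hi₀C]
    exact hnxne i₀ hi₀C
  have cpow : ∀ a, (c ^ a) i₀ = orb g i₀ a := by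
    intro a
    induction a with
    | zero => simp [orb_zero]
    | succ a ih =>
      rw [pow_succ', Equiv.Perm.mul_apply, ih, orb_succ]
      exact hcC _ (hCmem a)
  have ccyc : c.IsCycle := by
    refine ⟨i₀, hci₀, fun y hy => ?_⟩
    have hyC : y ∈ C := by
      by_contra h
      exact hy (hcnC y h)
    obtain ⟨a, _, ha⟩ := hCelim y hyC
    exact ⟨(a : ℤ), by rw [zpow_natCast, cpow, ha]⟩
  have ccard : C.card = p := by
    rw [hC, Finset.card_image_of_injOn, Finset.card_range]
    intro a ha b hb he
    exact oinj a b (Finset.mem_range.mp ha) (Finset.mem_range.mp hb) he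
  have csupp : c.support = C := by
    ext j
    rw [Equiv.Perm.mem_support]
    constructor
    · intro h
      by_contra hj
      exact h (hcnC j hj)
    · intro hj
      rw [hcC j hj]
      exact hnxne j hj
  have csign : Equiv.Perm.sign c = -(-1)^p := by
    rw [ccyc.sign, csupp, ccard]
  -- key lemmas about compatible permutations
  have K2 : ∀ σ : Equiv.Perm (Fin N), (∀ i, σ i ≠ i → g i = some (σ i)) →
      ∀ j ∈ C, σ j ≠ j → σ i₀ ≠ i₀ := by
    intro σ hcomp j hjC hjne
    obtain ⟨a, hap, ha⟩ := hCelim j hjC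
    have hch := chainlem h1 hcomp hjne
    have hle : a ≤ p * (a + 1) := by
      have h2 : a + 1 ≤ p * (a + 1) := Nat.le_mul_of_pos_left _ hp0
      omega
    have hb : (p * (a + 1) - a) + a = p * (a + 1) := Nat.sub_add_cancel hle
    have h2 := (hch (p * (a + 1) - a)).1
    have e1 : (nx g)^[p*(a+1)-a] j = i₀ := by
      rw [← ha]
      show (nx g)^[p*(a+1)-a] ((nx g)^[a] i₀) = i₀
      rw [← Function.iterate_add_apply, hb]
      exact operiodmul (a+1)
    have e2 : (nx g)^[p*(a+1)-a+1] j = nx g i₀ := by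
      rw [← ha]
      show (nx g)^[p*(a+1)-a+1] ((nx g)^[a] i₀) = nx g i₀
      rw [← Function.iterate_add_apply]
      have h3 : p*(a+1)-a+1+a = p*(a+1)+1 := by omega
      rw [h3]
      show orb g i₀ (p*(a+1)+1) = nx g i₀
      rw [orb_succ, operiodmul (a+1)]
    rw [e1, e2] at h2
    rw [h2]
    exact hnxne i₀ hi₀C
  have K1' : ∀ σ : Equiv.Perm (Fin N), (∀ i, σ i ≠ i → g i = some (σ i)) →
      σ i₀ = i₀ → ∀ j ∈ C, σ j = j := by
    intro σ hcomp hfix j hjC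
    by_contra h
    exact K2 σ hcomp j hjC h hfix
  have K3 : ∀ σ : Equiv.Perm (Fin N), (∀ i, σ i ≠ i → g i = some (σ i)) →
      σ i₀ ≠ i₀ → ∀ j ∈ C, σ j = nx g j := by
    intro σ hcomp hσ j hjC
    obtain ⟨a, hap, ha⟩ := hCelim j hjC
    have hch := chainlem h1 hcomp hσ a
    rw [← ha]
    have h2 : σ ((nx g)^[a] i₀) = (nx g)^[a+1] i₀ := hch.1
    show σ ((nx g)^[a] i₀) = nx g ((nx g)^[a] i₀)
    rw [h2, ← Function.iterate_succ_apply' (nx g) a i₀]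
  -- the sign-reversing term identity
  have Lterm : ∀ σ : Equiv.Perm (Fin N), (∀ i, σ i ≠ i → g i = some (σ i)) →
      (∀ j ∈ C, σ j = j) → pterm G n g (σ * c) = - pterm G n g σ := by
    intro σ hcomp hfixC
    have hsign : ((Equiv.Perm.sign (σ * c) : ℤ) : ℂ)
        = ((Equiv.Perm.sign σ : ℤ) : ℂ) * (-(-1:ℂ)^p) := by
      rw [Equiv.Perm.sign_mul, csign]
      push_cast
      ring
    have hCnew : ∀ i ∈ C, wA G n i ((σ * c) i) (g i) = -(G i (nx g i)) := by
      intro i hi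
      have hin : i ≠ n := fun h => hnC (h ▸ hi)
      have h2 : (σ * c) i = nx g i := by
        rw [Equiv.Perm.mul_apply, hcC i hi, hfixC _ (hnxC i hi)]
      rw [h2, wA, if_neg hin, if_neg (hnxne i hi), if_pos (hgC i hi)]
    have hCold : ∀ i ∈ C, wA G n i (σ i) (g i) = G i (nx g i) := by
      intro i hi
      have hin : i ≠ n := fun h => hnC (h ▸ hi)
      rw [hfixC i hi, wA, if_neg hin, if_pos rfl, hgC i hi]
      simp only [daggerWeight]
      rw [if_neg (fun h => hnxne i hi h.symm)]
    have hCc : ∀ i ∈ Cᶜ, wA G n i ((σ * c) i) (g i) = wA G n i (σ i) (g i) := by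
      intro i hi
      rw [Equiv.Perm.mul_apply, hcnC i (Finset.mem_compl.mp hi)]
    have hnewprod : (∏ i, wA G n i ((σ * c) i) (g i))
        = ((-1:ℂ)^p * ∏ i ∈ C, wA G n i (σ i) (g i))
            * (∏ i ∈ Cᶜ, wA G n i (σ i) (g i)) := by
      rw [← Finset.prod_mul_prod_compl C (fun i => wA G n i ((σ * c) i) (g i))]
      rw [Finset.prod_congr rfl hCnew, Finset.prod_congr rfl hCc]
      congr 1
      have h3 : ∀ i ∈ C, -(G i (nx g i)) = (-1 : ℂ) * (G i (nx g i)) := by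
        intro i _; ring
      rw [Finset.prod_congr rfl h3, Finset.prod_mul_distrib, Finset.prod_const, ccard]
      rw [Finset.prod_congr rfl hCold]
    rw [pterm, pterm, hsign, hnewprod,
      ← Finset.prod_mul_prod_compl C (fun i => wA G n i (σ i) (g i))]
    exact signflip _ _ _ p
  -- reduce to compatible permutations and apply the involution
  have hfilter : Tsum G n g = ∑ σ ∈ Finset.univ.filter
      (fun σ : Equiv.Perm (Fin N) => ∀ i, σ i ≠ i → g i = some (σ i)), pterm G n g σ :=
    (Finset.sum_filter_of_ne (fun σ _ h => compat_of_ne_zero G n h)).symm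
  rw [hfilter]
  refine Finset.sum_involution
    (fun σ _ => if σ i₀ = i₀ then σ * c else σ * c⁻¹) ?_ ?_ ?_ ?_
  · -- sums to zero
    intro σ hσ
    have hcomp := (Finset.mem_filter.mp hσ).2
    by_cases hfix : σ i₀ = i₀
    · rw [if_pos hfix, Lterm σ hcomp (K1' σ hcomp hfix)]
      ring
    · rw [if_neg hfix]
      have hfix' : ∀ j ∈ C, (σ * c⁻¹) j = j := by
        intro j hj
        rw [Equiv.Perm.mul_apply, K3 σ hcomp hfix _ (hcinvC j hj),
          ← hcC _ (hcinvC j hj), ← Equiv.Perm.mul_apply, mul_inv_cancel, Equiv.Perm.one_apply]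
      have hcomp' : ∀ i, (σ * c⁻¹) i ≠ i → g i = some ((σ * c⁻¹) i) := by
        intro i hi
        by_cases hiC : i ∈ C
        · exact absurd (hfix' i hiC) hi
        · rw [Equiv.Perm.mul_apply, hcinvnC i hiC] at hi ⊢
          exact hcomp i hi
      have h4 : (σ * c⁻¹) * c = σ := inv_mul_cancel_right σ c
      have := Lterm (σ * c⁻¹) hcomp' hfix'
      rw [h4] at this
      rw [this]
      ring
  · -- not fixed
    intro σ hσ hne
    by_cases hfix : σ i₀ = i₀
    · rw [if_pos hfix]
      intro h
      have hc1 : c = 1 := mul_left_cancel (a := σ) (by rw [h, mul_one])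
      exact hci₀ (by rw [hc1]; rfl)
    · rw [if_neg hfix]
      intro h
      have hc1 : c⁻¹ = 1 := mul_left_cancel (a := σ) (by rw [h, mul_one])
      have : c = 1 := by rw [← inv_inv c, hc1]; rfl
      exact hci₀ (by rw [this]; rfl)
  · -- membership
    intro σ hσ
    have hcomp := (Finset.mem_filter.mp hσ).2
    refine Finset.mem_filter.mpr ⟨Finset.mem_univ _, ?_⟩
    by_cases hfix : σ i₀ = i₀
    · rw [if_pos hfix]
      intro i hi
      by_cases hiC : i ∈ C
      · rw [Equiv.Perm.mul_apply, hcC i hiC, K1' σ hcomp hfix _ (hnxC i hiC)]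
        exact hgC i hiC
      · rw [Equiv.Perm.mul_apply, hcnC i hiC] at hi ⊢
        exact hcomp i hi
    · rw [if_neg hfix]
      intro i hi
      by_cases hiC : i ∈ C
      · exfalso
        apply hi
        rw [Equiv.Perm.mul_apply, K3 σ hcomp hfix _ (hcinvC i hiC),
          ← hcC _ (hcinvC i hiC), ← Equiv.Perm.mul_apply, mul_inv_cancel, Equiv.Perm.one_apply]
      · rw [Equiv.Perm.mul_apply, hcinvnC i hiC] at hi ⊢
        exact hcomp i hi
  · -- involutive
    intro σ hσ
    have hcomp := (Finset.mem_filter.mp hσ).2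
    by_cases hfix : σ i₀ = i₀
    · rw [if_pos hfix]
      have h2 : (σ * c) i₀ ≠ i₀ := by
        rw [Equiv.Perm.mul_apply, hcC i₀ hi₀C, K1' σ hcomp hfix _ (hnxC i₀ hi₀C)]
        exact hnxne i₀ hi₀C
      rw [if_neg h2, mul_inv_cancel_right]
    · rw [if_neg hfix]
      have h2 : (σ * c⁻¹) i₀ = i₀ := by
        rw [Equiv.Perm.mul_apply, K3 σ hcomp hfix _ (hcinvC i₀ hi₀C),
          ← hcC _ (hcinvC i₀ hi₀C), ← Equiv.Perm.mul_apply, mul_inv_cancel, Equiv.Perm.one_apply]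
      rw [if_pos h2, inv_mul_cancel_right]

end S15

namespace S15

variable {N : ℕ}

def Good (g : Fin N → Option (Fin N)) (n : Fin N) : Prop :=
  g n = none ∧ ∀ i, ¬ Relation.TransGen (gStep g) i i

def toF (n : Fin N) (g : Fin N → Option (Fin N)) :
    Option (Fin N) → Option (Option (Fin N))
  | none => none
  | some i => if i = n then none else some (g i)

def toG (f : Option (Fin N) → Option (Option (Fin N))) : Fin N → Option (Fin N) :=
  fun i => (f (some i)).join

lemma toF_step {g : Fin N → Option (Fin N)} {n : Fin N} {a b : Option (Fin N)}
    (h : FStep (toF n g) a b) : ∃ i, a = some i ∧ i ≠ n ∧ g i = b := by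
  unfold FStep at h
  match a with
  | none => exact absurd h (by simp [toF])
  | some i =>
    by_cases hin : i = n
    · rw [show toF n g (some i) = none by simp [toF, hin]] at h
      exact absurd h (by simp)
    · rw [show toF n g (some i) = some (g i) by simp [toF, hin]] at h
      exact ⟨i, rfl, hin, by injection h⟩

lemma lift_trans {g : Fin N → Option (Fin N)} {n : Fin N} {a b : Option (Fin N)}
    (h : Relation.TransGen (FStep (toF n g)) a b) :
    ∀ i j : Fin N, a = some i → b = some j → Relation.TransGen (gStep g) i j := by
  induction h with
  | single h =>
    intro i j hi hj
    subst hi; subst hj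
    obtain ⟨i', hi', _, hgi⟩ := toF_step h
    have : i' = i := by injection hi'.symm
    subst this
    exact Relation.TransGen.single hgi
  | tail hab hbc ih =>
    intro i k hi hk
    subst hk
    obtain ⟨j, hj, _, hgj⟩ := toF_step hbc
    exact Relation.TransGen.tail (ih i j hi hj) hgj

lemma good_isForest {g : Fin N → Option (Fin N)} {n : Fin N} (hGood : Good g n) :
    IsForest (toF n g) := by
  intro v h
  match v with
  | none =>
    obtain ⟨b, hb, _⟩ := Relation.TransGen.head'_iff.mp h
    obtain ⟨i, hi, _, _⟩ := toF_step hb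
    exact nomatch hi
  | some i =>
    exact hGood.2 i (lift_trans h i i rfl rfl)

lemma roots_toF (g : Fin N → Option (Fin N)) (n : Fin N) :
    roots (toF n g) = {none, some n} := by
  ext v
  simp only [roots, Finset.mem_filter, Finset.mem_univ, true_and, Finset.mem_insert,
    Finset.mem_singleton]
  match v with
  | none => simp [toF]
  | some i =>
    by_cases hin : i = n
    · simp [toF, hin]
    · simp [toF, hin]

lemma toG_toF {g : Fin N → Option (Fin N)} {n : Fin N} (hgn : g n = none) :
    toG (toF n g) = g := by
  funext i
  by_cases hin : i = n
  · simp [toG, toF, hin, hgn.symm]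
  · simp [toG, toF, hin]

lemma roots_char {f : Option (Fin N) → Option (Option (Fin N))} {n : Fin N}
    (hr : roots f = {none, some n}) :
    ∀ v, f v = none ↔ (v = none ∨ v = some n) := by
  intro v
  have := Finset.ext_iff.mp hr v
  simpa [roots] using this

lemma toF_toG {f : Option (Fin N) → Option (Option (Fin N))} {n : Fin N}
    (hnone : f none = none) (hr : roots f = {none, some n}) :
    toF n (toG f) = f := by
  funext v
  match v with
  | none => exact hnone.symm
  | some i =>
    by_cases hin : i = n
    · have : f (some n) = none := (roots_char hr (some n)).mpr (Or.inr rfl)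
      simp [toF, hin, this.symm]
    · have hne : f (some i) ≠ none := by
        intro h
        rcases (roots_char hr (some i)).mp h with h' | h'
        · exact nomatch h'
        · exact hin (by injection h')
      obtain ⟨u, hu⟩ := Option.ne_none_iff_exists'.mp hne
      show (if i = n then none else some (toG f i)) = f (some i)
      rw [if_neg hin, toG, hu]
      rfl

lemma good_toG {f : Option (Fin N) → Option (Option (Fin N))} {n : Fin N}
    (hforest : IsForest f) (hr : roots f = {none, some n}) : Good (toG f) n := by
  constructor
  · have : f (some n) = none := (roots_char hr (some n)).mpr (Or.inr rfl)
    simp [toG, this]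
  · intro i h
    have hlift : Relation.TransGen (FStep f) (some i) (some i) := by
      refine Relation.TransGen.lift (fun i : Fin N => (some i : Option (Fin N))) ?_ i i h
      intro a b hab
      exact Option.join_eq_some_iff.mp hab
    exact hforest (some i) hlift

variable (G : Matrix (Fin N) (Fin N) ℂ) (n : Fin N)

lemma prod_toF (g : Fin N → Option (Fin N)) :
    forestProd (daggerWeight G) (toF n g)
      = ∏ i, (if i = n then 1 else daggerWeight G (some i) (g i)) := by
  unfold forestProd
  rw [Fintype.prod_option]
  simp only [toF]
  rw [one_mul]
  refine Finset.prod_congr rfl fun i _ => ?_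
  by_cases hin : i = n
  · simp [toF, hin]
  · simp [toF, hin]

end S15

/-- The (n,n) entry of the adjugate of -G equals the signless sum of forest
products over all two-tree spanning forests of G† rooted at † and n. -/
theorem stmt15 {N : ℕ} (G : Matrix (Fin N) (Fin N) ℂ) (n : Fin N) :
    Matrix.adjugate (-G) n n =
      ∑ᶠ f ∈ {f : Option (Fin N) → Option (Option (Fin N)) |
          IsForest f ∧ f none = none ∧ roots f = {none, some n}},
        forestProd (daggerWeight G) f := by
  classical
  have hS : {f : Option (Fin N) → Option (Option (Fin N)) |
      IsForest f ∧ f none = none ∧ roots f = {none, some n}}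
      = ↑(Finset.univ.filter (fun f : Option (Fin N) → Option (Option (Fin N)) =>
          IsForest f ∧ f none = none ∧ roots f = {none, some n})) := by
    ext f
    simp only [Set.mem_setOf_eq, Finset.coe_filter, Finset.mem_univ, true_and]
  rw [hS, finsum_mem_coe_finset, Matrix.adjugate_apply, S15.det_eq G n]
  have hz : ∀ g : Fin N → Option (Fin N), ¬ S15.Good g n → S15.Tsum G n g = 0 := by
    intro g hng
    by_cases hgn : g n = none
    · by_cases hloop : ∃ i, g i = some i
      · obtain ⟨i, hi⟩ := hloop
        exact S15.Tsum_zero_of_loop G n hi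
      · push_neg at hloop
        have hcyc : ∃ i₀, Relation.TransGen (S15.gStep g) i₀ i₀ := by
          by_contra hac
          push_neg at hac
          exact hng ⟨hgn, hac⟩
        obtain ⟨i₀, hi₀⟩ := hcyc
        exact S15.Tsum_cyc G n hgn hloop hi₀
    · exact S15.Tsum_zero_of_gn G n hgn
  have e1 : (∑ g : Fin N → Option (Fin N), S15.Tsum G n g)
      = ∑ g ∈ Finset.univ.filter (fun g : Fin N → Option (Fin N) => S15.Good g n),
          S15.Tsum G n g :=
    (Finset.sum_filter_of_ne (fun g _ h => by
      by_contra hng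
      exact h (hz g hng))).symm
  rw [e1]
  refine Finset.sum_nbij' (S15.toF n) S15.toG ?_ ?_ ?_ ?_ ?_
  · intro g hg
    have hGood := (Finset.mem_filter.mp hg).2
    refine Finset.mem_filter.mpr ⟨Finset.mem_univ _, ?_, rfl, S15.roots_toF g n⟩
    exact S15.good_isForest hGood
  · intro f hf
    obtain ⟨-, hforest, hnone, hr⟩ := Finset.mem_filter.mp hf
    exact Finset.mem_filter.mpr ⟨Finset.mem_univ _, S15.good_toG hforest hr⟩
  · intro g hg
    exact S15.toG_toF (Finset.mem_filter.mp hg).2.1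
  · intro f hf
    obtain ⟨-, hforest, hnone, hr⟩ := Finset.mem_filter.mp hf
    exact S15.toF_toG hnone hr
  · intro g hg
    have hGood := (Finset.mem_filter.mp hg).2
    rw [S15.Tsum_good G n hGood.1 hGood.2, S15.prod_toF G n g]
end
end

section
/- If G is a matrix with nonnegative off-diagonal entries and nonpositive row sums (so that all arc weights g_ij, i≠j, and g_{i†} = -Σ_j g_ij are nonnegative), then every coefficient of the characteristic polynomial det(λI - G) = Σ_k λ^k c_k satisfies c_k ≥ 0, since c_k = Σ_{F ∈ F^k_†} π_F is a sum of products of nonnegative numbers. -/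
open scoped Classical
open Finset

noncomputable section

namespace Stmt17Aux

variable {V : Type*} [Fintype V] [DecidableEq V]

def PStep (p : V → Option V) (a b : V) : Prop := p a = some b

def NoCycle (p : V → Option V) : Prop := ∀ v, ¬ Relation.TransGen (PStep p) v v

def Compat (p : V → Option V) (σ : Equiv.Perm V) : Prop :=
  ∀ i, σ i ≠ i → p i = some (σ i)

theorem compat_eq_one (p : V → Option V) (hnc : NoCycle p) (σ : Equiv.Perm V)
    (hc : Compat p σ) : σ = 1 := by
  by_contra hσ
  obtain ⟨i, hi⟩ : ∃ i, σ i ≠ i := by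
    by_contra h; push_neg at h; exact hσ (Equiv.ext h)
  have hsup : ∀ n : ℕ, σ ((σ ^ n) i) ≠ (σ ^ n) i := by
    intro n
    have h1 : (σ ^ n) i ∈ σ.support :=
      Equiv.Perm.pow_apply_mem_support.mpr (Equiv.Perm.mem_support.mpr hi)
    exact Equiv.Perm.mem_support.mp h1
  have key : ∀ n : ℕ, Relation.TransGen (PStep p) i ((σ ^ (n+1)) i) := by
    intro n
    induction n with
    | zero =>
        have : (σ ^ 1) i = σ i := by simp
        rw [this]
        exact Relation.TransGen.single (hc i hi)
    | succ n ih =>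
        have h1 : (σ ^ (n+2)) i = σ ((σ ^ (n+1)) i) := by
          rw [pow_succ']; rfl
        rw [h1]
        exact Relation.TransGen.tail ih (hc _ (hsup (n+1)))
  have hord : 0 < orderOf σ := orderOf_pos σ
  have h1 : (σ ^ (orderOf σ - 1 + 1)) i = i := by
    rw [Nat.sub_add_cancel hord, pow_orderOf_eq_one]; rfl
  have := key (orderOf σ - 1)
  rw [h1] at this
  exact hnc i this

theorem core_cancel (p : V → Option V) (hl : ∀ i, p i ≠ some i)
    (v₀ : V) (hv₀ : Relation.TransGen (PStep p) v₀ v₀) :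
    (∑ σ : Equiv.Perm V,
        if Compat p σ then ((Equiv.Perm.sign σ : ℤ) * (-1) ^ σ.support.card) else 0) = 0 := by
  classical
  set F : V → V := fun x => (p x).getD x with hFdef
  have hstep : ∀ a b, PStep p a b → F a = b := by
    intro a b h
    have h' : p a = some b := h
    simp only [F, h', Option.getD_some]
  -- extract the cycle data
  have reach : ∀ x, Relation.TransGen (PStep p) v₀ x →
      ∃ m, 0 < m ∧ x = F^[m] v₀ ∧ ∀ t < m, p (F^[t] v₀) = some (F^[t+1] v₀) := by
    intro x h
    induction h with
    | single h =>
        refine ⟨1, one_pos, ?_, ?_⟩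
        · simp only [Function.iterate_one]
          exact (hstep _ _ h).symm
        · intro t ht
          have ht0 : t = 0 := Nat.lt_one_iff.mp ht
          subst ht0
          simp only [Function.iterate_zero, Function.iterate_one, id_eq]
          rw [h]
          exact congrArg some (hstep _ _ h).symm
    | tail hab hbc ih =>
        obtain ⟨m, hm0, hb, hpath⟩ := ih
        refine ⟨m + 1, Nat.succ_pos m, ?_, ?_⟩
        · rw [Function.iterate_succ_apply', ← hb]
          exact (hstep _ _ hbc).symm
        · intro t ht
          rcases Nat.lt_succ_iff_lt_or_eq.mp ht with h | h
          · exact hpath t h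
          · subst h
            rw [← hb, hbc]
            refine congrArg some ?_
            rw [Function.iterate_succ_apply', ← hb]
            exact (hstep _ _ hbc).symm
  obtain ⟨m, hm0, hmv, hpath⟩ := reach v₀ hv₀
  have hper : ∀ t, F^[t + m] v₀ = F^[t] v₀ := by
    intro t; rw [Function.iterate_add_apply, ← hmv]
  have hmod : ∀ t, F^[t] v₀ = F^[t % m] v₀ := by
    intro t
    induction t using Nat.strong_induction_on with
    | _ t ih =>
      by_cases ht : t < m
      · rw [Nat.mod_eq_of_lt ht]
      · push_neg at ht
        have h1 : t - m + m = t := Nat.sub_add_cancel ht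
        have h2 : t - m < t := Nat.sub_lt (lt_of_lt_of_le hm0 ht) hm0
        rw [← h1, hper, ih _ h2, Nat.add_mod_right]
  have hpath' : ∀ t, p (F^[t] v₀) = some (F^[t+1] v₀) := by
    intro t
    have h1 : F^[t] v₀ = F^[t % m] v₀ := hmod t
    have h2 : F^[t+1] v₀ = F^[t % m + 1] v₀ := by
      rw [Function.iterate_succ_apply', Function.iterate_succ_apply', h1]
    rw [h1, h2]
    exact hpath (t % m) (Nat.mod_lt _ hm0)
  set O : Finset V := (Finset.range m).image (fun t => F^[t] v₀) with hOdef
  have hmemO : ∀ x, x ∈ O ↔ ∃ t, F^[t] v₀ = x := by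
    intro x
    constructor
    · intro hx
      obtain ⟨t, _, ht⟩ := Finset.mem_image.mp hx
      exact ⟨t, ht⟩
    · rintro ⟨t, rfl⟩
      exact Finset.mem_image.mpr ⟨t % m, Finset.mem_range.mpr (Nat.mod_lt _ hm0), (hmod t).symm⟩
  have hv₀O : v₀ ∈ O := (hmemO v₀).mpr ⟨0, rfl⟩
  have hiterO : ∀ x ∈ O, ∀ k, F^[k] x ∈ O := by
    intro x hx k
    obtain ⟨t, rfl⟩ := (hmemO x).mp hx
    exact (hmemO _).mpr ⟨k + t, (Function.iterate_add_apply F k t v₀)⟩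
  have hFO : ∀ x ∈ O, F x ∈ O := fun x hx => hiterO x hx 1
  have hpO : ∀ x ∈ O, p x = some (F x) := by
    intro x hx
    obtain ⟨t, rfl⟩ := (hmemO x).mp hx
    rw [hpath' t, Function.iterate_succ_apply']
  have hFne : ∀ x ∈ O, F x ≠ x := by
    intro x hx h
    exact hl x (by rw [hpO x hx, h])
  have hFm : ∀ x ∈ O, F^[m] x = x := by
    intro x hx
    obtain ⟨t, rfl⟩ := (hmemO x).mp hx
    rw [← Function.iterate_add_apply, Nat.add_comm, hper]
  -- the cyclic permutation c
  set c : Equiv.Perm V := {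
    toFun := fun x => if x ∈ O then F x else x
    invFun := fun x => if x ∈ O then F^[m-1] x else x
    left_inv := by
      intro x
      by_cases hx : x ∈ O
      · simp only [if_pos hx, if_pos (hFO x hx)]
        have h1 : F^[m-1] (F x) = F^[m-1+1] x := (Function.iterate_succ_apply F (m-1) x).symm
        rw [h1, Nat.sub_add_cancel hm0]
        exact hFm x hx
      · simp only [if_neg hx]
    right_inv := by
      intro x
      by_cases hx : x ∈ O
      · simp only [if_pos hx, if_pos (hiterO x hx (m-1))]
        have h1 : F (F^[m-1] x) = F^[m-1+1] x := (Function.iterate_succ_apply' F (m-1) x).symm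
        rw [h1, Nat.sub_add_cancel hm0]
        exact hFm x hx
      · simp only [if_neg hx] } with hcdef
  have hcap : ∀ x, c x = if x ∈ O then F x else x := fun _ => rfl
  have hcinvap : ∀ x, c⁻¹ x = if x ∈ O then F^[m-1] x else x := fun _ => rfl
  have hcO : ∀ x ∈ O, c x = F x := by intro x hx; rw [hcap, if_pos hx]
  have hcn : ∀ x, x ∉ O → c x = x := by intro x hx; rw [hcap, if_neg hx]
  have hcinvO : ∀ x ∈ O, c⁻¹ x ∈ O := by
    intro x hx; rw [hcinvap, if_pos hx]; exact hiterO x hx (m-1)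
  have hsuppc : c.support = O := by
    ext x
    rw [Equiv.Perm.mem_support]
    constructor
    · intro h
      by_contra hx
      exact h (hcn x hx)
    · intro hx
      rw [hcO x hx]
      exact hFne x hx
  have hcpow : ∀ t : ℕ, (c ^ t) v₀ = F^[t] v₀ := by
    intro t
    induction t with
    | zero => simp
    | succ t ih =>
        have h1 : (c ^ (t+1)) v₀ = c ((c ^ t) v₀) := by rw [pow_succ']; rfl
        rw [h1, ih, hcO _ (hiterO v₀ hv₀O t), Function.iterate_succ_apply']
  have hcyc : c.IsCycle := by
    refine ⟨v₀, ?_, ?_⟩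
    · rw [hcO v₀ hv₀O]; exact hFne v₀ hv₀O
    · intro y hy
      have hyO : y ∈ O := by
        by_contra h; exact hy (hcn y h)
      obtain ⟨t, ht⟩ := (hmemO y).mp hyO
      exact ⟨(t : ℤ), by rw [zpow_natCast, hcpow, ht]⟩
  have hsignc : ((Equiv.Perm.sign c : ℤˣ) : ℤ) = -(-1) ^ O.card := by
    rw [hcyc.sign, hsuppc]
    simp
  -- characterization of compatible permutations on O
  have hchar : ∀ σ : Equiv.Perm V, Compat p σ → (∃ j ∈ O, σ j ≠ j) →
      ∀ x ∈ O, σ x = F x := by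
    intro σ hcσ ⟨j, hjO, hj⟩
    have hval : ∀ x ∈ O, σ x ≠ x → σ x = F x := by
      intro x hx h
      have h1 := hcσ x h
      have h2 := hpO x hx
      rw [h1] at h2
      exact Option.some_injective _ h2
    have hmove : ∀ k, σ (F^[k] j) ≠ F^[k] j := by
      intro k
      induction k with
      | zero => simpa using hj
      | succ k ih =>
          have hkO : F^[k] j ∈ O := hiterO j hjO k
          have hσk : σ (F^[k] j) = F (F^[k] j) := hval _ hkO ih
          rw [Function.iterate_succ_apply']
          intro h
          have h2 : σ (F (F^[k] j)) = σ (F^[k] j) := by rw [h, hσk]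
          exact hFne _ hkO (σ.injective h2)
    intro x hx
    obtain ⟨s, hs⟩ := (hmemO j).mp hjO
    obtain ⟨t, ht⟩ := (hmemO x).mp hx
    have hs' : F^[s % m] v₀ = j := by rw [← hmod]; exact hs
    have ht' : F^[t % m] v₀ = x := by rw [← hmod]; exact ht
    have hsm : s % m < m := Nat.mod_lt _ hm0
    have hk : F^[t % m + m - s % m] j = x := by
      rw [← hs', ← Function.iterate_add_apply]
      have : t % m + m - s % m + s % m = t % m + m := Nat.sub_add_cancel (by omega)
      rw [this, hper, ht']
    have hmv2 := hmove (t % m + m - s % m)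
    rw [hk] at hmv2
    exact hval x hx hmv2
  have hcharfix : ∀ σ : Equiv.Perm V, Compat p σ → σ v₀ = v₀ → ∀ x ∈ O, σ x = x := by
    intro σ hcσ hσv x hx
    by_contra h
    have h2 := hchar σ hcσ ⟨x, hx, h⟩ v₀ hv₀O
    rw [hσv] at h2
    exact hFne v₀ hv₀O h2.symm
  -- split the sum
  have hsplit : (∑ σ : Equiv.Perm V,
      if Compat p σ then ((Equiv.Perm.sign σ : ℤ) * (-1) ^ σ.support.card) else 0)
      = (∑ σ : Equiv.Perm V,
          if Compat p σ ∧ σ v₀ = v₀ then ((Equiv.Perm.sign σ : ℤ) * (-1) ^ σ.support.card) else 0)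
      + (∑ σ : Equiv.Perm V,
          if Compat p σ ∧ σ v₀ ≠ v₀ then ((Equiv.Perm.sign σ : ℤ) * (-1) ^ σ.support.card) else 0) := by
    rw [← Finset.sum_add_distrib]
    refine Finset.sum_congr rfl ?_
    intro σ _
    by_cases h1 : Compat p σ
    · by_cases h2 : σ v₀ = v₀
      · rw [if_pos h1, if_pos ⟨h1, h2⟩, if_neg (fun h => h.2 h2), add_zero]
      · rw [if_pos h1, if_neg (fun h => h2 h.2), if_pos ⟨h1, h2⟩, zero_add]
    · rw [if_neg h1, if_neg (fun h => h1 h.1), if_neg (fun h => h1 h.1), add_zero]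
  rw [hsplit]
  -- reindex the second sum by right multiplication by c
  have hre : (∑ σ : Equiv.Perm V,
      if Compat p σ ∧ σ v₀ ≠ v₀ then ((Equiv.Perm.sign σ : ℤ) * (-1) ^ σ.support.card) else 0)
      = ∑ σ : Equiv.Perm V,
        if Compat p (σ * c) ∧ (σ * c) v₀ ≠ v₀
        then ((Equiv.Perm.sign (σ * c) : ℤ) * (-1) ^ (σ * c).support.card) else 0 := by
    exact (Fintype.sum_equiv (Equiv.mulRight c)
      (fun σ => if Compat p (σ * c) ∧ (σ * c) v₀ ≠ v₀
        then ((Equiv.Perm.sign (σ * c) : ℤ) * (-1) ^ (σ * c).support.card) else 0)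
      (fun σ => if Compat p σ ∧ σ v₀ ≠ v₀
        then ((Equiv.Perm.sign σ : ℤ) * (-1) ^ σ.support.card) else 0)
      (fun σ => rfl)).symm
  rw [hre]
  rw [← Finset.sum_add_distrib]
  rw [Finset.sum_eq_zero]
  intro σ _
  by_cases h1 : Compat p σ ∧ σ v₀ = v₀
  · -- σ fixes O pointwise; σ * c moves v₀
    have hfix : ∀ x ∈ O, σ x = x := hcharfix σ h1.1 h1.2
    have hcmp : Compat p (σ * c) := by
      intro i hi
      by_cases hiO : i ∈ O
      · have h2 : (σ * c) i = F i := by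
          rw [Equiv.Perm.mul_apply, hcO i hiO, hfix _ (hFO i hiO)]
        rw [h2]
        exact hpO i hiO
      · have h2 : (σ * c) i = σ i := by rw [Equiv.Perm.mul_apply, hcn i hiO]
        rw [h2] at hi ⊢
        exact h1.1 i hi
    have hne : (σ * c) v₀ ≠ v₀ := by
      rw [Equiv.Perm.mul_apply, hcO v₀ hv₀O, hfix _ (hFO v₀ hv₀O)]
      exact hFne v₀ hv₀O
    rw [if_pos h1, if_pos ⟨hcmp, hne⟩]
    -- sign computation
    have hdisj : σ.Disjoint c := by
      intro x
      by_cases hx : x ∈ O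
      · exact Or.inl (hfix x hx)
      · exact Or.inr (hcn x hx)
    have hsgn : ((Equiv.Perm.sign (σ * c) : ℤˣ) : ℤ)
        = ((Equiv.Perm.sign σ : ℤˣ) : ℤ) * (-(-1) ^ O.card) := by
      rw [map_mul]
      push_cast
      rw [hsignc]
    have hcard : (σ * c).support.card = σ.support.card + O.card := by
      rw [hdisj.card_support_mul, hsuppc]
    rw [hsgn, hcard, pow_add]
    have hsq : ((-1 : ℤ) ^ O.card) * ((-1 : ℤ) ^ O.card) = 1 := by
      rw [← pow_add]
      exact Even.neg_one_pow ⟨O.card, rfl⟩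
    linear_combination (-((Equiv.Perm.sign σ : ℤˣ) : ℤ) * (-1) ^ σ.support.card) * hsq
  · rw [if_neg h1]
    rw [if_neg ?_, add_zero]
    rintro ⟨hcmp2, hne2⟩
    -- derive Compat p σ ∧ σ v₀ = v₀, contradiction
    have hτ : ∀ x ∈ O, (σ * c) x = F x := hchar (σ * c) hcmp2 ⟨v₀, hv₀O, hne2⟩
    have hσx : ∀ x, σ x = (σ * c) (c⁻¹ x) := by
      intro x
      rw [Equiv.Perm.mul_apply, Equiv.Perm.eq_inv_iff_eq.mp rfl]
    have hσv : σ v₀ = v₀ := by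
      rw [hσx, hτ _ (hcinvO v₀ hv₀O), ← hcO _ (hcinvO v₀ hv₀O), Equiv.Perm.eq_inv_iff_eq.mp rfl]
    have hσcmp : Compat p σ := by
      intro i hi
      by_cases hiO : i ∈ O
      · exfalso
        apply hi
        rw [hσx, hτ _ (hcinvO i hiO), ← hcO _ (hcinvO i hiO), Equiv.Perm.eq_inv_iff_eq.mp rfl]
      · have h2 : c⁻¹ i = i := by
          rw [hcinvap, if_neg hiO]
        have h3 : σ i = (σ * c) i := by rw [hσx, h2]
        rw [h3] at hi ⊢
        exact hcmp2 i hi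
    exact h1 ⟨hσcmp, hσv⟩

theorem core_sum (p : V → Option V) (hl : ∀ i, p i ≠ some i) :
    (∑ σ : Equiv.Perm V,
        if Compat p σ then ((Equiv.Perm.sign σ : ℤ) * (-1) ^ σ.support.card) else 0)
      = if NoCycle p then 1 else 0 := by
  by_cases hnc : NoCycle p
  · rw [if_pos hnc, Finset.sum_eq_single (1 : Equiv.Perm V)]
    · rw [if_pos]
      · simp
      · intro i hi
        simp at hi
    · intro σ _ hσ
      rw [if_neg]
      intro hc
      exact hσ (compat_eq_one p hnc σ hc)
    · intro h
      exact absurd (Finset.mem_univ _) h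
  · rw [if_neg hnc]
    simp only [NoCycle, not_forall, not_not] at hnc
    obtain ⟨v₀, hv₀⟩ := hnc
    exact core_cancel p hl v₀ hv₀

/-- arc-extraction from an augmented out-neighbor map -/
def st (g : V → Option (Option V)) : V → Option V := fun i =>
  match g i with
  | some (some j) => some j
  | _ => none

theorem st_eq_some {g : V → Option (Option V)} {i j : V} :
    st g i = some j ↔ g i = some (some j) := by
  unfold st
  rcases h : g i with _ | (_ | u) <;> simp


end Stmt17Aux

namespace Stmt17Aux

variable {V : Type*} [Fintype V] [DecidableEq V]

/-- factor weights for the expansion of the characteristic matrix -/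
noncomputable def AA (M : Matrix V V ℝ) : V → Option (Option V) → Polynomial ℝ := fun i c =>
  match c with
  | none => Polynomial.X
  | some none => Polynomial.C (-(∑ j, M i j))
  | some (some j) => if i = j then 0 else Polynomial.C (M i j)

theorem charpoly_eq (M : Matrix V V ℝ) :
    M.charpoly = ∑ g : V → Option (Option V),
      if NoCycle (st g) then ∏ i, AA M i (g i) else 0 := by
  classical
  have key : ∀ σ : Equiv.Perm V,
      ((-1 : Polynomial ℝ) ^ σ.support.card) * ∏ i, Matrix.charmatrix M i (σ i)
        = ∑ g : V → Option (Option V),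
            if (∀ i, σ i ≠ i → g i = some (some (σ i))) then ∏ i, AA M i (g i) else 0 := by
    intro σ
    set A' : V → Option (Option V) → Polynomial ℝ := fun i c =>
      if σ i ≠ i then (if c = some (some (σ i)) then AA M i c else 0) else AA M i c with hA'
    have suma : ∀ i, (∑ c : Option (Option V), A' i c)
        = if σ i ≠ i then -(Matrix.charmatrix M i (σ i)) else Matrix.charmatrix M i i := by
      intro i
      by_cases h : σ i ≠ i
      · simp only [hA', if_pos h]
        rw [Finset.sum_ite_eq' Finset.univ (some (some (σ i))) (AA M i)]
        rw [if_pos (Finset.mem_univ _)]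
        have hne : i ≠ σ i := fun hh => h hh.symm
        have h1 : AA M i (some (some (σ i))) = Polynomial.C (M i (σ i)) := by
          simp only [AA, if_neg hne]
        rw [h1, Matrix.charmatrix_apply_ne M _ _ hne, neg_neg]
      · simp only [hA', if_neg h]
        push_neg at h
        rw [Fintype.sum_option, Fintype.sum_option]
        have h1 : (∑ j, AA M i (some (some j)))
            = Polynomial.C (∑ j, M i j) - Polynomial.C (M i i) := by
          have h2 : ∀ j : V, AA M i (some (some j))
              = Polynomial.C (M i j) - (if i = j then Polynomial.C (M i j) else 0) := by
            intro j
            simp only [AA]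
            split <;> simp
          rw [Finset.sum_congr rfl (fun j _ => h2 j), Finset.sum_sub_distrib,
            Finset.sum_ite_eq Finset.univ i (fun j => Polynomial.C (M i j)),
            if_pos (Finset.mem_univ _), ← map_sum]
        show Polynomial.X + (Polynomial.C (-(∑ j, M i j)) + ∑ j, AA M i (some (some j)))
            = Matrix.charmatrix M i i
        rw [h1, Matrix.charmatrix_apply_eq, map_neg]
        ring
    have prodsum : (∏ i, ∑ c : Option (Option V), A' i c)
        = ∑ g : V → Option (Option V), ∏ i, A' i (g i) := Fintype.prod_sum _
    have hleft : (∏ i, ∑ c : Option (Option V), A' i c)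
        = ((-1 : Polynomial ℝ) ^ σ.support.card) * ∏ i, Matrix.charmatrix M i (σ i) := by
      rw [Finset.prod_congr rfl (fun i _ => suma i)]
      have h2 : ∀ i : V, (if σ i ≠ i then -(Matrix.charmatrix M i (σ i))
          else Matrix.charmatrix M i i)
          = (if σ i ≠ i then (-1 : Polynomial ℝ) else 1) * Matrix.charmatrix M i (σ i) := by
        intro i
        by_cases h : σ i ≠ i
        · rw [if_pos h, if_pos h]; ring
        · push_neg at h
          rw [if_neg (by simpa using h), if_neg (by simpa using h), one_mul, h]
      rw [Finset.prod_congr rfl (fun i _ => h2 i), Finset.prod_mul_distrib]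
      congr 1
      rw [Finset.prod_ite, Finset.prod_const, Finset.prod_const, one_pow, mul_one]
      have hfil : filter (fun x => σ x ≠ x) univ = σ.support := by
        ext x; simp [Equiv.Perm.mem_support]
      rw [hfil]
    have hright : ∀ g : V → Option (Option V), (∏ i, A' i (g i))
        = if (∀ i, σ i ≠ i → g i = some (some (σ i))) then ∏ i, AA M i (g i) else 0 := by
      intro g
      by_cases hg : ∀ i, σ i ≠ i → g i = some (some (σ i))
      · rw [if_pos hg]
        refine Finset.prod_congr rfl ?_
        intro i _
        by_cases h : σ i ≠ i
        · simp only [hA', if_pos h, if_pos (hg i h)]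
        · simp only [hA', if_neg h]
      · rw [if_neg hg]
        push_neg at hg
        obtain ⟨i, hi1, hi2⟩ := hg
        refine Finset.prod_eq_zero (Finset.mem_univ i) ?_
        simp only [hA', if_pos hi1, if_neg hi2]
    rw [← hleft, prodsum]
    exact Finset.sum_congr rfl (fun g _ => hright g)
  -- now expand the determinant
  have hdet : M.charpoly = ∑ σ : Equiv.Perm V,
      ((Equiv.Perm.sign σ : ℤ) : Polynomial ℝ) * ∏ i, Matrix.charmatrix M i (σ i) := by
    show (Matrix.charmatrix M).det = _
    rw [← Matrix.det_transpose, Matrix.det_apply']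
    exact Finset.sum_congr rfl (fun σ _ => rfl)
  rw [hdet]
  have step2 : ∀ σ : Equiv.Perm V,
      ((Equiv.Perm.sign σ : ℤ) : Polynomial ℝ) * ∏ i, Matrix.charmatrix M i (σ i)
      = ∑ g : V → Option (Option V),
          (if (∀ i, σ i ≠ i → g i = some (some (σ i)))
            then (((Equiv.Perm.sign σ : ℤ) * (-1) ^ σ.support.card : ℤ) : Polynomial ℝ) else 0)
          * ∏ i, AA M i (g i) := by
    intro σ
    have h1 : ((Equiv.Perm.sign σ : ℤ) : Polynomial ℝ) * ∏ i, Matrix.charmatrix M i (σ i)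
        = (((Equiv.Perm.sign σ : ℤ) * (-1) ^ σ.support.card : ℤ) : Polynomial ℝ)
          * (((-1 : Polynomial ℝ) ^ σ.support.card) * ∏ i, Matrix.charmatrix M i (σ i)) := by
      push_cast
      have hsq : ((-1 : Polynomial ℝ) ^ σ.support.card) * ((-1 : Polynomial ℝ) ^ σ.support.card) = 1 := by
        rw [← pow_add]
        exact Even.neg_one_pow ⟨σ.support.card, rfl⟩
      linear_combination (-((Equiv.Perm.sign σ : ℤ) : Polynomial ℝ) * ∏ i, Matrix.charmatrix M i (σ i)) * hsq
    rw [h1, key σ, Finset.mul_sum]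
    refine Finset.sum_congr rfl ?_
    intro g _
    rw [mul_ite, mul_zero, ite_mul, zero_mul]
  rw [Finset.sum_congr rfl (fun σ _ => step2 σ), Finset.sum_comm]
  refine Finset.sum_congr rfl ?_
  intro g _
  rw [← Finset.sum_mul]
  by_cases hsl : ∀ i, g i ≠ some (some i)
  · have hcond : ∀ σ : Equiv.Perm V,
        (∀ i, σ i ≠ i → g i = some (some (σ i))) ↔ Compat (st g) σ := by
      intro σ
      constructor
      · intro h i hi
        exact st_eq_some.mpr (h i hi)
      · intro h i hi
        exact st_eq_some.mp (h i hi)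
    have hl : ∀ i, st g i ≠ some i := fun i h => hsl i (st_eq_some.mp h)
    have hsum : (∑ σ : Equiv.Perm V,
        if (∀ i, σ i ≠ i → g i = some (some (σ i)))
          then (((Equiv.Perm.sign σ : ℤ) * (-1) ^ σ.support.card : ℤ) : Polynomial ℝ) else 0)
        = ((if NoCycle (st g) then (1:ℤ) else 0 : ℤ) : Polynomial ℝ) := by
      rw [← core_sum (st g) hl, Int.cast_sum]
      refine Finset.sum_congr rfl ?_
      intro σ _
      by_cases hP : Compat (st g) σ
      · rw [if_pos hP, if_pos ((hcond σ).mpr hP)]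
      · rw [if_neg hP, if_neg (fun h => hP ((hcond σ).mp h))]
        simp
    rw [hsum]
    by_cases hnc : NoCycle (st g)
    · rw [if_pos hnc, if_pos hnc]; push_cast; ring
    · rw [if_neg hnc, if_neg hnc]; push_cast; ring
  · push_neg at hsl
    obtain ⟨i, hi⟩ := hsl
    have hz : (∏ i, AA M i (g i)) = 0 := by
      refine Finset.prod_eq_zero (Finset.mem_univ i) ?_
      rw [hi]
      simp [AA]
    rw [hz, mul_zero, if_neg, ]
    intro hnc
    exact hnc i (Relation.TransGen.single (st_eq_some.mpr hi))


end Stmt17Aux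

namespace Stmt17Aux

variable {V : Type*} [Fintype V] [DecidableEq V]

noncomputable def wf0 (M : Matrix V V ℝ) (i : V) : Option (Option V) → ℝ
  | none => 1
  | some none => -(∑ j, M i j)
  | some (some j) => if i = j then 0 else M i j

noncomputable def W (M : Matrix V V ℝ) (g : V → Option (Option V)) : ℝ :=
  ∏ i, wf0 M i (g i)

theorem prod_AA_eq (M : Matrix V V ℝ) (g : V → Option (Option V)) :
    (∏ i, AA M i (g i)) = Polynomial.C (W M g)
      * Polynomial.X ^ (univ.filter (fun i => g i = none)).card := by
  classical
  rw [← Finset.prod_filter_mul_prod_filter_not univ (fun i => g i = none)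
    (fun i => AA M i (g i))]
  have h1 : (∏ i ∈ univ.filter (fun i => g i = none), AA M i (g i))
      = Polynomial.X ^ (univ.filter (fun i => g i = none)).card := by
    rw [Finset.prod_congr rfl (fun i hi => ?_), Finset.prod_const]
    have hgi : g i = none := (Finset.mem_filter.mp hi).2
    rw [hgi]
    rfl
  have h2 : (∏ i ∈ univ.filter (fun i => ¬ g i = none), AA M i (g i))
      = Polynomial.C (∏ i ∈ univ.filter (fun i => ¬ g i = none), wf0 M i (g i)) := by
    rw [map_prod]
    refine Finset.prod_congr rfl (fun i hi => ?_)
    rcases h : g i with _ | (_ | j)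
    · exact absurd h (Finset.mem_filter.mp hi).2
    · rfl
    · show (if i = j then (0:Polynomial ℝ) else Polynomial.C (M i j)) = _
      show _ = Polynomial.C (if i = j then 0 else M i j)
      split <;> simp
  have h3 : W M g = ∏ i ∈ univ.filter (fun i => ¬ g i = none), wf0 M i (g i) := by
    rw [W, ← Finset.prod_filter_mul_prod_filter_not univ (fun i => g i = none)
      (fun i => wf0 M i (g i))]
    rw [Finset.prod_congr rfl (fun i hi => ?_), Finset.prod_const, one_pow, one_mul]
    rw [(Finset.mem_filter.mp hi).2]
    rfl
  rw [h1, h2, ← h3, mul_comm]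

theorem coeff_charpoly_eq (M : Matrix V V ℝ) (k : ℕ) :
    M.charpoly.coeff k = ∑ g ∈ univ.filter (fun g : V → Option (Option V) =>
      NoCycle (st g) ∧ (univ.filter (fun i => g i = none)).card = k), W M g := by
  classical
  rw [charpoly_eq M, Polynomial.finset_sum_coeff, Finset.sum_filter]
  refine Finset.sum_congr rfl (fun g _ => ?_)
  by_cases hnc : NoCycle (st g)
  · rw [if_pos hnc, prod_AA_eq, Polynomial.coeff_C_mul_X_pow]
    by_cases hk : (univ.filter (fun i => g i = none)).card = k
    · rw [if_pos hk.symm, if_pos (show NoCycle (st g) ∧ _ from ⟨hnc, hk⟩)]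
    · rw [if_neg (fun h : k = _ => hk h.symm),
        if_neg (fun h : NoCycle (st g) ∧ _ => hk h.2)]
  · rw [if_neg hnc, Polynomial.coeff_zero,
      if_neg (fun h : NoCycle (st g) ∧ _ => hnc h.1)]


end Stmt17Aux

namespace Stmt17Aux

variable {N : ℕ}

theorem ext_forest_iff (g : Fin N → Option (Option (Fin N))) :
    IsForest (fun v : Option (Fin N) => v.elim none g) ↔ NoCycle (st g) := by
  constructor
  · intro hf i hcyc
    apply hf (some i)
    refine Relation.TransGen.lift some ?_ i i hcyc
    intro a b hab
    show (some a : Option (Fin N)).elim none g = some (some b)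
    exact st_eq_some.mp hab
  · intro hnc v hcyc
    have down : ∀ (i : Fin N) (b : Option (Fin N)),
        Relation.TransGen (FStep (fun v : Option (Fin N) => v.elim none g)) (some i) b →
        ∀ j : Fin N, b = some j → Relation.TransGen (PStep (st g)) i j := by
      intro i b h
      induction h with
      | single hab =>
          intro j hb
          subst hb
          exact Relation.TransGen.single (st_eq_some.mpr hab)
      | @tail b' c' hab hbc ih =>
          intro j hb
          subst hb
          rcases b' with _ | j'
          · exact absurd hbc (by simp [FStep])
          · exact Relation.TransGen.tail (ih j' rfl) (st_eq_some.mpr hbc)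
    rcases v with _ | i
    · have hno : ∀ x : Option (Fin N),
          Relation.TransGen (FStep (fun v : Option (Fin N) => v.elim none g)) none x → False := by
        intro x h
        induction h with
        | single h => exact absurd h (by simp [FStep])
        | tail _ _ ih => exact ih
      exact hno none hcyc
    · exact hnc i (down i _ hcyc i rfl)

theorem roots_card (g : Fin N → Option (Option (Fin N))) :
    (roots (fun v : Option (Fin N) => v.elim none g)).card
      = (univ.filter (fun i => g i = none)).card + 1 := by
  have h1 : roots (fun v : Option (Fin N) => v.elim none g)
      = insert none ((univ.filter (fun i => g i = none)).map
          ⟨some, Option.some_injective _⟩) := by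
    ext v
    rcases v with _ | i <;> simp [_root_.roots]
  rw [h1, Finset.card_insert_of_notMem (by simp), Finset.card_map]

theorem prodeq (G : Matrix (Fin N) (Fin N) ℝ) (g : Fin N → Option (Option (Fin N))) :
    forestProd (daggerWeight G) (fun v : Option (Fin N) => v.elim none g) = W G g := by
  refine Eq.trans (Fintype.prod_option _) ?_
  beta_reduce
  trans ((1:ℝ) * ∏ i : Fin N, wf0 G i (g i))
  · refine congrArg₂ (· * ·) rfl (Finset.prod_congr rfl (fun i _ => ?_))
    rw [show ((some i : Option (Fin N)).elim none g) = g i from rfl]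
    rcases h : g i with _ | (_ | j) <;> rfl
  · rw [one_mul]
    rfl


end Stmt17Aux

/-- If G has nonnegative off-diagonal entries and nonpositive row sums, then each
coefficient of its characteristic polynomial is a signless sum of forest products
and hence nonnegative. -/
theorem stmt17 {N : ℕ} (G : Matrix (Fin N) (Fin N) ℝ)
    (hoff : ∀ i j, i ≠ j → 0 ≤ G i j) (hrow : ∀ i, ∑ j, G i j ≤ 0) :
    ∀ k, (Matrix.charpoly G).coeff k =
        (∑ᶠ f ∈ {f : Option (Fin N) → Option (Option (Fin N)) |
            IsForest f ∧ f none = none ∧ (roots f).card = k + 1},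
          forestProd (daggerWeight G) f) ∧
      0 ≤ (Matrix.charpoly G).coeff k := by
  classical
  intro k
  have hco := Stmt17Aux.coeff_charpoly_eq G k
  constructor
  · rw [hco]
    have hset : {f : Option (Fin N) → Option (Option (Fin N)) |
        IsForest f ∧ f none = none ∧ (roots f).card = k + 1}
        = ↑(univ.filter (fun f : Option (Fin N) → Option (Option (Fin N)) =>
            IsForest f ∧ f none = none ∧ (roots f).card = k + 1)) := by
      ext f; simp
    rw [hset, finsum_mem_coe_finset]
    refine Finset.sum_nbij' (i := fun g => (fun v : Option (Fin N) => v.elim none g))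
      (j := fun f => (f ∘ some)) ?_ ?_ ?_ ?_ ?_
    · intro g hg
      obtain ⟨hnc, hcard⟩ := (Finset.mem_filter.mp hg).2
      have h1 : IsForest (fun v : Option (Fin N) => v.elim none g) :=
        (Stmt17Aux.ext_forest_iff g).mpr hnc
      have h2 : (roots (fun v : Option (Fin N) => v.elim none g)).card = k + 1 := by
        rw [Stmt17Aux.roots_card, hcard]
      exact Finset.mem_filter.mpr ⟨Finset.mem_univ _, h1, rfl, h2⟩
    · intro f hf
      obtain ⟨hfor, hnone, hcard⟩ := (Finset.mem_filter.mp hf).2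
      have hext : (fun v : Option (Fin N) => v.elim none (f ∘ some)) = f := by
        funext v
        rcases v with _ | i
        · exact hnone.symm
        · rfl
      have h1 : Stmt17Aux.NoCycle (Stmt17Aux.st (f ∘ some)) := by
        rw [← Stmt17Aux.ext_forest_iff (f ∘ some), hext]
        exact hfor
      have h2 : (univ.filter (fun i => (f ∘ some) i = none)).card = k := by
        have h3 := Stmt17Aux.roots_card (f ∘ some)
        rw [hext, hcard] at h3
        omega
      exact Finset.mem_filter.mpr ⟨Finset.mem_univ _, h1, h2⟩
    · intro g _
      rfl
    · intro f hf
      obtain ⟨hfor, hnone, hcard⟩ := (Finset.mem_filter.mp hf).2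
      funext v
      rcases v with _ | i
      · exact hnone.symm
      · rfl
    · intro g _
      exact (Stmt17Aux.prodeq G g).symm
  · rw [hco]
    refine Finset.sum_nonneg (fun g _ => ?_)
    refine Finset.prod_nonneg (fun i _ => ?_)
    rcases h : g i with _ | (_ | j)
    · norm_num [Stmt17Aux.wf0]
    · show (0:ℝ) ≤ -(∑ j, G i j)
      linarith [hrow i]
    · show (0:ℝ) ≤ if i = j then 0 else G i j
      split
      · exact le_refl 0
      · next hne => exact hoff i j hne

end
end
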